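/- In the setting of the preceding handlebody construction (A a k×k real symmetric matrix with A − I positive definite, B real symmetric positive definite, Q(y,w) = ⟨Ay,y⟩ + ⟨Bv,v⟩ + |u|², ρ(z,w) = Q(y,w) − |x|², Λᵏ = {(x+i0,0) : x ∈ ℝᵏ}, and given r, ε > 0 let c₀, R, δ, h, τ be as produced there, so that τ = Q − h(|x|²) is strongly plurisubharmonic, τ = ρ + c₀ for |x|² ≥ R, {ρ ≤ −c₀} ∪ Λᵏ ⊆ {τ ≤ 0} ⊆ {ρ < −r} ∪ {Q < ε}, and 0 is the only critical point of τ): there exists c₁ > 0 such that for every c ∈ (0, c₁), the set K_c = {ζ ∈ ℂⁿ : τ(ζ) ≤ c} and the set E_{c−c₀} = {ζ : ρ(ζ) ≤ c − c₀} ∪ Λᵏ satisfy: (a) E_{c−c₀} ⊆ K_c ⊆ {ρ < −r} ∪ {Q < ε}; (b) the boundary bK_c = {τ = c} contains no critical point of τ and L_τ(p;v) > 0 for every p ∈ bK_c and nonzero v ∈ ℂⁿ (so K_c is a smoothly bounded strongly pseudoconvex domain); (c) there is a strong deformation retraction of K_c onto E_{c−c₀}, i.e. a continuous H : [0,1] ×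 K_c → K_c with H(0,·) = id, H(1, K_c) ⊆ E_{c−c₀} and H(t, e) = e for all e ∈ E_{c−c₀} and t ∈ [0,1]. -/

import Mathlib

open Complex Set

/-- The Levi form of a `C²` function `ρ` at `ζ` in direction `v`:
`4 L_ρ(ζ;v) = H_ζ(v,v) + H_ζ(iv,iv)` where `H_ζ` is the second real Fréchet derivative. -/
noncomputable def leviForm {E : Type*} [NormedAddCommGroup E] [NormedSpace ℂ E]
    (ρ : E → ℝ) (p v : E) : ℝ :=
  (iteratedFDeriv ℝ 2 ρ p ![v, v]
    + iteratedFDeriv ℝ 2 ρ p ![Complex.I • v, Complex.I • v]) / 4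

/-- `Q(y,w) = ⟨Ay,y⟩ + ⟨Bv,v⟩ + |u|²` for `ζ = (z,w) = (x+iy, u+iv) ∈ ℂᵏ × ℂ^{n-k}`. -/
def Qfun {k m : ℕ} (A : Matrix (Fin k) (Fin k) ℝ) (B : Matrix (Fin m) (Fin m) ℝ)
    (ζ : (Fin k → ℂ) × (Fin m → ℂ)) : ℝ :=
  (∑ i, ∑ j, A i j * (ζ.1 i).im * (ζ.1 j).im)
    + (∑ i, ∑ j, B i j * (ζ.2 i).im * (ζ.2 j).im)
    + ∑ i, (ζ.2 i).re ^ 2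

namespace HB19
open Finset Filter Topology
set_option linter.unusedSectionVars false

section quad
variable {ι : Type*} [Fintype ι] [DecidableEq ι]

lemma quad_expand (M : Matrix ι ι ℝ) (v : ι → ℝ) :
    dotProduct v (M.mulVec v) = ∑ i, ∑ j, M i j * v i * v j := by
  simp only [dotProduct, Matrix.mulVec, dotProduct, Finset.mul_sum]
  exact Finset.sum_congr rfl fun i _ => Finset.sum_congr rfl fun j _ => by ring

lemma quad_pos {M : Matrix ι ι ℝ} (hM : M.PosDef) {v : ι → ℝ} (hv : v ≠ 0) :
    0 < ∑ i, ∑ j, M i j * v i * v j := by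
  have := (Matrix.posDef_iff_dotProduct_mulVec.mp hM).2 hv
  rwa [star_trivial, quad_expand] at this

lemma quad_nonneg {M : Matrix ι ι ℝ} (hM : M.PosDef) (v : ι → ℝ) :
    0 ≤ ∑ i, ∑ j, M i j * v i * v j := by
  by_cases hv : v = 0
  · simp [hv]
  · exact (quad_pos hM hv).le

lemma sub_one_quad (M : Matrix ι ι ℝ) (v : ι → ℝ) :
    ∑ i, ∑ j, (M - 1) i j * v i * v j
      = (∑ i, ∑ j, M i j * v i * v j) - ∑ i, v i ^ 2 := by
  rw [← Finset.sum_sub_distrib]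
  refine Finset.sum_congr rfl fun i _ => ?_
  have e : ∀ j, (M - 1) i j * v i * v j
      = M i j * v i * v j - (if j = i then v i ^ 2 else 0) := fun j => by
    rcases eq_or_ne j i with hj | hj
    · subst hj; simp [Matrix.sub_apply, Matrix.one_apply]; ring
    · simp [Matrix.sub_apply, Matrix.one_apply, hj, Ne.symm hj]
  rw [Finset.sum_congr rfl fun j _ => e j, Finset.sum_sub_distrib]
  simp

lemma scale_quad (f : Matrix ι ι ℝ) (v : ι → ℝ) (s : ℝ) :
    ∑ i, ∑ j, f i j * (s * v i) * (s * v j) = s ^ 2 * ∑ i, ∑ j, f i j * v i * v j := by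
  rw [Finset.mul_sum]
  refine Finset.sum_congr rfl fun i _ => ?_
  rw [Finset.mul_sum]
  exact Finset.sum_congr rfl fun j _ => by ring

lemma scale_sq (v : ι → ℝ) (s : ℝ) :
    ∑ i, (s * v i) ^ 2 = s ^ 2 * ∑ i, v i ^ 2 := by
  rw [Finset.mul_sum]; exact Finset.sum_congr rfl fun i _ => by ring

lemma sumsq_zero {f : ι → ℝ} (h : ∑ i, f i ^ 2 ≤ 0) (i : ι) : f i = 0 := by
  have h1 : f i ^ 2 ≤ ∑ j, f j ^ 2 :=
    Finset.single_le_sum (fun j _ => sq_nonneg (f j)) (Finset.mem_univ i)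
  have := sq_nonneg (f i)
  nlinarith

lemma sumsq_nonneg (f : ι → ℝ) : 0 ≤ ∑ i, f i ^ 2 :=
  Finset.sum_nonneg fun i _ => sq_nonneg (f i)

lemma exists_beta {M : Matrix ι ι ℝ} (hM : M.PosDef) :
    ∃ β > (0:ℝ), ∀ v : ι → ℝ, β * ∑ i, v i ^ 2 ≤ ∑ i, ∑ j, M i j * v i * v j := by
  rcases isEmpty_or_nonempty ι with hι | hι
  · exact ⟨1, one_pos, fun v => by simp⟩
  · set S : Set (ι → ℝ) := {v | ∑ i, v i ^ 2 = 1} with hS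
    have hScl : IsClosed S := isClosed_eq (by fun_prop) continuous_const
    have hSbd : Bornology.IsBounded S := by
      rw [isBounded_iff_forall_norm_le]
      refine ⟨1, fun v hv => ?_⟩
      rw [pi_norm_le_iff_of_nonneg zero_le_one]
      intro i
      have h1 : v i ^ 2 ≤ 1 := by
        have := Finset.single_le_sum (fun j _ => sq_nonneg (v j)) (Finset.mem_univ i)
        rw [hv] at this; linarith [this]
      rw [Real.norm_eq_abs, ← Real.sqrt_one, ← Real.sqrt_sq_eq_abs]
      exact Real.sqrt_le_sqrt h1
    have hScp : IsCompact S := Metric.isCompact_of_isClosed_isBounded hScl hSbd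
    have hSne : S.Nonempty := by
      refine ⟨Pi.single hι.some 1, ?_⟩
      simp [hS, Pi.single_apply]
    obtain ⟨v₀, hv₀S, hmin⟩ := hScp.exists_isMinOn
      (f := fun v => ∑ i, ∑ j, M i j * v i * v j) hSne (by fun_prop)
    have hv₀ne : v₀ ≠ 0 := by
      intro h0
      rw [h0] at hv₀S
      simp [hS] at hv₀S
    refine ⟨∑ i, ∑ j, M i j * v₀ i * v₀ j, quad_pos hM hv₀ne, fun v => ?_⟩
    by_cases hv : ∑ i, v i ^ 2 = 0
    · rw [hv, mul_zero]; exact quad_nonneg hM v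
    · have hvpos : 0 < ∑ i, v i ^ 2 := lt_of_le_of_ne (sumsq_nonneg v) (Ne.symm hv)
      set n := Real.sqrt (∑ i, v i ^ 2) with hn
      have hnpos : 0 < n := Real.sqrt_pos.2 hvpos
      have hn2 : n ^ 2 = ∑ i, v i ^ 2 := Real.sq_sqrt hvpos.le
      have hmem : (fun i => n⁻¹ * v i) ∈ S := by
        rw [hS, Set.mem_setOf_eq, scale_sq, ← hn2]
        field_simp
      have hle := hmin hmem
      simp only [Set.mem_setOf_eq, scale_quad] at hle
      have h2 : (n⁻¹) ^ 2 = (∑ i, v i ^ 2)⁻¹ := by rw [← hn2]; simp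
      rw [h2] at hle
      calc (∑ i, ∑ j, M i j * v₀ i * v₀ j) * ∑ i, v i ^ 2
          ≤ ((∑ i, v i ^ 2)⁻¹ * ∑ i, ∑ j, M i j * v i * v j) * ∑ i, v i ^ 2 :=
            mul_le_mul_of_nonneg_right hle hvpos.le
        _ = ∑ i, ∑ j, M i j * v i * v j := by field_simp

end quad

variable {k m : ℕ} (A : Matrix (Fin k) (Fin k) ℝ) (B : Matrix (Fin m) (Fin m) ℝ)

lemma Qfun_cont : Continuous (Qfun A B) := by unfold Qfun; fun_prop

noncomputable def sig (a : ℝ) (ζ : (Fin k → ℂ) × (Fin m → ℂ)) : ℝ :=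
  Real.sqrt (min 1 (max 0 ((∑ i, (ζ.1 i).re ^ 2 + a) / Qfun A B ζ)))

noncomputable def sfac (a : ℝ) (p : ℝ × ((Fin k → ℂ) × (Fin m → ℂ))) : ℝ :=
  1 - min 1 (max 0 p.1) * (1 - sig A B a p.2)

noncomputable def Hmap (a : ℝ) (p : ℝ × ((Fin k → ℂ) × (Fin m → ℂ))) :
    (Fin k → ℂ) × (Fin m → ℂ) :=
  (fun i => ((p.2.1 i).re : ℂ) + ((sfac A B a p * (p.2.1 i).im : ℝ) : ℂ) * Complex.I,
   fun i => ((sfac A B a p : ℝ) : ℂ) * p.2.2 i)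

lemma sig_nonneg (a : ℝ) (ζ) : 0 ≤ sig A B a ζ := Real.sqrt_nonneg _

lemma sig_le_one (a : ℝ) (ζ) : sig A B a ζ ≤ 1 :=
  Real.sqrt_le_one.2 (min_le_left _ _)

lemma sfac_nonneg (a : ℝ) (p) : 0 ≤ sfac A B a p := by
  have h1 : min 1 (max 0 p.1) ≤ 1 := min_le_left _ _
  have h2 : (0:ℝ) ≤ min 1 (max 0 p.1) := le_min zero_le_one (le_max_left _ _)
  have h3 := sig_nonneg A B a p.2
  have h4 := sig_le_one A B a p.2
  rw [sfac]; nlinarith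

lemma sfac_le_one (a : ℝ) (p) : sfac A B a p ≤ 1 := by
  have h2 : (0:ℝ) ≤ min 1 (max 0 p.1) := le_min zero_le_one (le_max_left _ _)
  have h4 := sig_le_one A B a p.2
  rw [sfac]; nlinarith

lemma Hmap_re (a : ℝ) (p) (i : Fin k) : ((Hmap A B a p).1 i).re = (p.2.1 i).re := by
  simp [Hmap]

lemma Hmap_im (a : ℝ) (p) (i : Fin k) :
    ((Hmap A B a p).1 i).im = sfac A B a p * (p.2.1 i).im := by
  simp [Hmap]

lemma Hmap_w_re (a : ℝ) (p) (i : Fin m) :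
    ((Hmap A B a p).2 i).re = sfac A B a p * (p.2.2 i).re := by
  simp [Hmap]

lemma Hmap_w_im (a : ℝ) (p) (i : Fin m) :
    ((Hmap A B a p).2 i).im = sfac A B a p * (p.2.2 i).im := by
  simp [Hmap]

lemma Hmap_t (a : ℝ) (p) :
    ∑ i, (((Hmap A B a p).1 i).re) ^ 2 = ∑ i, ((p.2.1 i).re) ^ 2 := by
  simp [Hmap_re]

lemma Hmap_Q (a : ℝ) (p) :
    Qfun A B (Hmap A B a p) = (sfac A B a p) ^ 2 * Qfun A B p.2 := by
  unfold Qfun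
  simp only [Hmap_im, Hmap_w_im, Hmap_w_re]
  rw [scale_quad, scale_quad, scale_sq]
  ring

lemma Hmap_id_of_sig_one (a : ℝ) (p) (hs : sig A B a p.2 = 1) : Hmap A B a p = p.2 := by
  have hsf : sfac A B a p = 1 := by rw [sfac, hs]; ring
  rw [Hmap, hsf]
  refine Prod.ext ?_ ?_ <;> funext i <;> simp [Complex.ext_iff]

lemma Hmap_zero_time (a : ℝ) (p) (hp : p.1 = 0) : Hmap A B a p = p.2 := by
  have hsf : sfac A B a p = 1 := by simp [sfac, hp]
  rw [Hmap, hsf]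
  refine Prod.ext ?_ ?_ <;> funext i <;> simp [Complex.ext_iff]

lemma Hmap_lam (a : ℝ) (p) (hy : ∀ i, (p.2.1 i).im = 0) (hw : p.2.2 = 0) :
    Hmap A B a p = p.2 := by
  rw [Hmap]
  refine Prod.ext ?_ ?_ <;> funext i
  · simp [Complex.ext_iff, hy i]
  · simp [hw]

lemma Hmap_sfac_zero (a : ℝ) (p) (hs : sfac A B a p = 0) :
    (∀ i, ((Hmap A B a p).1 i).im = 0) ∧ (Hmap A B a p).2 = 0 := by
  constructor
  · intro i; rw [Hmap_im, hs, zero_mul]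
  · funext i
    show ((sfac A B a p : ℝ) : ℂ) * p.2.2 i = 0
    rw [hs]; simp

lemma Hmap_cont (a : ℝ)
    (hcoer : ∀ ζ : (Fin k → ℂ) × (Fin m → ℂ), Qfun A B ζ = 0 →
      (∀ i, (ζ.1 i).im = 0) ∧ ζ.2 = 0) :
    Continuous (Hmap A B a) := by
  have habs : ∀ p, |sfac A B a p| ≤ 1 := fun p => by
    rw [abs_le]; exact ⟨by linarith [sfac_nonneg A B a p], sfac_le_one A B a p⟩
  rw [continuous_iff_continuousAt]
  intro p₀
  by_cases hQ : Qfun A B p₀.2 = 0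
  · obtain ⟨hy0, hw0⟩ := hcoer _ hQ
    have hH0 : Hmap A B a p₀ = p₀.2 := Hmap_lam A B a p₀ hy0 hw0
    rw [ContinuousAt, hH0]
    rw [show (𝓝 p₀.2 : Filter ((Fin k → ℂ) × (Fin m → ℂ))) = 𝓝 p₀.2.1 ×ˢ 𝓝 p₀.2.2
      from nhds_prod_eq]
    unfold Hmap
    refine Tendsto.prodMk ?_ ?_
    · rw [tendsto_pi_nhds]
      intro i
      have h1 : Tendsto (fun p : ℝ × ((Fin k → ℂ) × (Fin m → ℂ)) => ((p.2.1 i).re : ℂ))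
          (𝓝 p₀) (𝓝 ((p₀.2.1 i).re : ℂ)) := Continuous.tendsto (by fun_prop) p₀
      have hb : Tendsto (fun p : ℝ × ((Fin k → ℂ) × (Fin m → ℂ)) => |(p.2.1 i).im|)
          (𝓝 p₀) (𝓝 0) := by
        have : Tendsto (fun p : ℝ × ((Fin k → ℂ) × (Fin m → ℂ)) => |(p.2.1 i).im|)
            (𝓝 p₀) (𝓝 |(p₀.2.1 i).im|) := Continuous.tendsto (by fun_prop) p₀
        rwa [hy0 i, abs_zero] at this
      have h2 : Tendsto (fun p : ℝ × ((Fin k → ℂ) × (Fin m → ℂ)) =>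
          ((sfac A B a p * (p.2.1 i).im : ℝ) : ℂ) * Complex.I) (𝓝 p₀) (𝓝 0) := by
        refine squeeze_zero_norm (fun p => ?_) hb
        have : ‖((sfac A B a p * (p.2.1 i).im : ℝ) : ℂ) * Complex.I‖
            = |sfac A B a p| * |(p.2.1 i).im| := by
          rw [norm_mul, Complex.norm_I, mul_one, Complex.norm_real, Real.norm_eq_abs, abs_mul]
        rw [this]
        calc |sfac A B a p| * |(p.2.1 i).im| ≤ 1 * |(p.2.1 i).im| :=
              mul_le_mul_of_nonneg_right (habs p) (abs_nonneg _)
          _ = |(p.2.1 i).im| := one_mul _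
      have h3 := h1.add h2
      rw [add_zero] at h3
      have hz : ((p₀.2.1 i).re : ℂ) = p₀.2.1 i := by
        apply Complex.ext <;> simp [hy0 i]
      rwa [hz] at h3
    · rw [tendsto_pi_nhds]
      intro i
      have hb : Tendsto (fun p : ℝ × ((Fin k → ℂ) × (Fin m → ℂ)) => ‖p.2.2 i‖)
          (𝓝 p₀) (𝓝 0) := by
        have : Tendsto (fun p : ℝ × ((Fin k → ℂ) × (Fin m → ℂ)) => ‖p.2.2 i‖)
            (𝓝 p₀) (𝓝 ‖p₀.2.2 i‖) := Continuous.tendsto (by fun_prop) p₀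
        rwa [show p₀.2.2 i = 0 by rw [hw0]; rfl, norm_zero] at this
      have h2 : Tendsto (fun p : ℝ × ((Fin k → ℂ) × (Fin m → ℂ)) =>
          ((sfac A B a p : ℝ) : ℂ) * p.2.2 i) (𝓝 p₀) (𝓝 0) := by
        refine squeeze_zero_norm (fun p => ?_) hb
        rw [norm_mul, Complex.norm_real]
        calc ‖sfac A B a p‖ * ‖p.2.2 i‖ ≤ 1 * ‖p.2.2 i‖ :=
              mul_le_mul_of_nonneg_right (habs p) (norm_nonneg _)
          _ = ‖p.2.2 i‖ := one_mul _
      rw [show p₀.2.2 i = 0 by rw [hw0]; rfl]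
      exact h2
  · have hsig : ContinuousAt (fun p : ℝ × ((Fin k → ℂ) × (Fin m → ℂ)) => sig A B a p.2) p₀ := by
      unfold sig
      apply Real.continuous_sqrt.continuousAt.comp
      apply Filter.Tendsto.min tendsto_const_nhds
      apply Filter.Tendsto.max tendsto_const_nhds
      exact ContinuousAt.div (by fun_prop)
        (((Qfun_cont A B).comp continuous_snd).continuousAt) hQ
    have hsf : ContinuousAt (sfac A B a) p₀ := by
      unfold sfac
      exact Filter.Tendsto.sub tendsto_const_nhds ((Filter.Tendsto.min tendsto_const_nhds
        (Filter.Tendsto.max tendsto_const_nhds continuous_fst.continuousAt)).mul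
        (Filter.Tendsto.sub tendsto_const_nhds hsig))
    unfold Hmap
    refine ContinuousAt.prodMk ?_ ?_
    · rw [continuousAt_pi]
      intro i
      refine ContinuousAt.add (by fun_prop) ?_
      exact (Complex.continuous_ofReal.continuousAt.comp (hsf.mul (by fun_prop))).mul
        continuousAt_const
    · rw [continuousAt_pi]
      intro i
      exact (Complex.continuous_ofReal.continuousAt.comp hsf).mul (by fun_prop)

end HB19
set_option maxHeartbeats 1000000 in
theorem stmt_19 {k m : ℕ} (hk : 1 ≤ k)
    (A : Matrix (Fin k) (Fin k) ℝ) (hAsymm : A.IsSymm) (hAI : (A - 1).PosDef)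
    (B : Matrix (Fin m) (Fin m) ℝ) (hBsymm : B.IsSymm) (hBpd : B.PosDef)
    (r ε : ℝ) (hr : 0 < r) (hε : 0 < ε)
    (c₀ R δ : ℝ) (hrc₀ : r < c₀) (hc₀R : c₀ < R) (hδ : 0 < δ)
    (h : ℝ → ℝ)
    -- `h, τ` are as produced by the handlebody construction
    (hh : ContDiffOn ℝ (⊤ : ℕ∞) h (Ici 0))
    (hhpos : ∀ t ∈ Ici (0 : ℝ), 0 ≤ h t)
    (hmono : ∀ t ∈ Ici (0 : ℝ), 0 ≤ derivWithin h (Ici 0) t)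
    (hconv : ∀ t ∈ Ici (0 : ℝ), 0 ≤ derivWithin (derivWithin h (Ici 0)) (Ici 0) t)
    -- `τ = Q - h(|x|²)` is strongly plurisubharmonic
    (hpsh : ∀ ζ v : (Fin k → ℂ) × (Fin m → ℂ), v ≠ 0 →
      0 < leviForm (fun ζ => Qfun A B ζ - h (∑ i, (ζ.1 i).re ^ 2)) ζ v)
    -- `τ = Q - δ|x|²` for `|x|² ≤ r`,  `τ = ρ + c₀` for `|x|² ≥ R`
    (hi : ∀ ζ : (Fin k → ℂ) × (Fin m → ℂ), (∑ i, (ζ.1 i).re ^ 2) ≤ r →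
      h (∑ i, (ζ.1 i).re ^ 2) = δ * ∑ i, (ζ.1 i).re ^ 2)
    (hii : ∀ ζ : (Fin k → ℂ) × (Fin m → ℂ), R ≤ (∑ i, (ζ.1 i).re ^ 2) →
      Qfun A B ζ - h (∑ i, (ζ.1 i).re ^ 2) =
        (Qfun A B ζ - ∑ i, (ζ.1 i).re ^ 2) + c₀)
    -- `{ρ ≤ -c₀} ∪ Λᵏ ⊆ {τ ≤ 0} ⊆ {ρ < -r} ∪ {Q < ε}`
    (hiii₁ : ({ζ : (Fin k → ℂ) × (Fin m → ℂ) |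
          Qfun A B ζ - (∑ i, (ζ.1 i).re ^ 2) ≤ -c₀} ∪
        {ζ : (Fin k → ℂ) × (Fin m → ℂ) | (∀ i, (ζ.1 i).im = 0) ∧ ζ.2 = 0}) ⊆
      {ζ : (Fin k → ℂ) × (Fin m → ℂ) | Qfun A B ζ - h (∑ i, (ζ.1 i).re ^ 2) ≤ 0})
    (hiii₂ : {ζ : (Fin k → ℂ) × (Fin m → ℂ) |
        Qfun A B ζ - h (∑ i, (ζ.1 i).re ^ 2) ≤ 0} ⊆
      ({ζ : (Fin k → ℂ) × (Fin m → ℂ) |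
          Qfun A B ζ - (∑ i, (ζ.1 i).re ^ 2) < -r} ∪
        {ζ : (Fin k → ℂ) × (Fin m → ℂ) | Qfun A B ζ < ε}))
    -- the origin is the only critical point of `τ`
    (hcrit : ∀ ζ : (Fin k → ℂ) × (Fin m → ℂ),
      fderiv ℝ (fun ζ => Qfun A B ζ - h (∑ i, (ζ.1 i).re ^ 2)) ζ = 0 ↔ ζ = 0) :
    ∃ c₁ > (0 : ℝ), ∀ c : ℝ, 0 < c → c < c₁ →
      -- (a) `E_{c-c₀} ⊆ K_c ⊆ {ρ < -r} ∪ {Q < ε}`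
      (({ζ : (Fin k → ℂ) × (Fin m → ℂ) |
            Qfun A B ζ - (∑ i, (ζ.1 i).re ^ 2) ≤ c - c₀} ∪
          {ζ : (Fin k → ℂ) × (Fin m → ℂ) | (∀ i, (ζ.1 i).im = 0) ∧ ζ.2 = 0}) ⊆
        {ζ : (Fin k → ℂ) × (Fin m → ℂ) |
          Qfun A B ζ - h (∑ i, (ζ.1 i).re ^ 2) ≤ c}) ∧
      ({ζ : (Fin k → ℂ) × (Fin m → ℂ) |
          Qfun A B ζ - h (∑ i, (ζ.1 i).re ^ 2) ≤ c} ⊆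
        ({ζ : (Fin k → ℂ) × (Fin m → ℂ) |
            Qfun A B ζ - (∑ i, (ζ.1 i).re ^ 2) < -r} ∪
          {ζ : (Fin k → ℂ) × (Fin m → ℂ) | Qfun A B ζ < ε})) ∧
      -- (b) the boundary `bK_c = {τ = c}` contains no critical point of `τ`,
      -- and the Levi form of `τ` is positive there
      (frontier {ζ : (Fin k → ℂ) × (Fin m → ℂ) |
          Qfun A B ζ - h (∑ i, (ζ.1 i).re ^ 2) ≤ c} =
        {ζ : (Fin k → ℂ) × (Fin m → ℂ) |
          Qfun A B ζ - h (∑ i, (ζ.1 i).re ^ 2) = c}) ∧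
      (∀ p : (Fin k → ℂ) × (Fin m → ℂ),
        Qfun A B p - h (∑ i, (p.1 i).re ^ 2) = c →
        fderiv ℝ (fun ζ => Qfun A B ζ - h (∑ i, (ζ.1 i).re ^ 2)) p ≠ 0 ∧
        ∀ v : (Fin k → ℂ) × (Fin m → ℂ), v ≠ 0 →
          0 < leviForm (fun ζ => Qfun A B ζ - h (∑ i, (ζ.1 i).re ^ 2)) p v) ∧
      -- (c) a strong deformation retraction of `K_c` onto `E_{c-c₀}`
      (∃ H : ℝ × ((Fin k → ℂ) × (Fin m → ℂ)) → (Fin k → ℂ) × (Fin m → ℂ),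
        ContinuousOn H ((Icc (0 : ℝ) 1) ×ˢ
          {ζ : (Fin k → ℂ) × (Fin m → ℂ) |
            Qfun A B ζ - h (∑ i, (ζ.1 i).re ^ 2) ≤ c}) ∧
        (∀ t ∈ Icc (0 : ℝ) 1, ∀ ζ : (Fin k → ℂ) × (Fin m → ℂ),
          Qfun A B ζ - h (∑ i, (ζ.1 i).re ^ 2) ≤ c →
          Qfun A B (H (t, ζ)) - h (∑ i, ((H (t, ζ)).1 i).re ^ 2) ≤ c) ∧
        (∀ ζ : (Fin k → ℂ) × (Fin m → ℂ),
          Qfun A B ζ - h (∑ i, (ζ.1 i).re ^ 2) ≤ c → H (0, ζ) = ζ) ∧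
        (∀ ζ : (Fin k → ℂ) × (Fin m → ℂ),
          Qfun A B ζ - h (∑ i, (ζ.1 i).re ^ 2) ≤ c →
          H (1, ζ) ∈
            ({ζ : (Fin k → ℂ) × (Fin m → ℂ) |
                Qfun A B ζ - (∑ i, (ζ.1 i).re ^ 2) ≤ c - c₀} ∪
              {ζ : (Fin k → ℂ) × (Fin m → ℂ) | (∀ i, (ζ.1 i).im = 0) ∧ ζ.2 = 0})) ∧
        (∀ t ∈ Icc (0 : ℝ) 1, ∀ e ∈
            ({ζ : (Fin k → ℂ) × (Fin m → ℂ) |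
                Qfun A B ζ - (∑ i, (ζ.1 i).re ^ 2) ≤ c - c₀} ∪
              {ζ : (Fin k → ℂ) × (Fin m → ℂ) | (∀ i, (ζ.1 i).im = 0) ∧ ζ.2 = 0}),
          H (t, e) = e)) := by  classical
  have hQc : Continuous (Qfun A B) := HB19.Qfun_cont A B
  have htc : Continuous (fun ζ : (Fin k → ℂ) × (Fin m → ℂ) => ∑ i, (ζ.1 i).re ^ 2) := by
    fun_prop
  have htnn : ∀ ζ : (Fin k → ℂ) × (Fin m → ℂ), 0 ≤ ∑ i, (ζ.1 i).re ^ 2 :=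
    fun ζ => HB19.sumsq_nonneg _
  have hhc : Continuous (fun ζ : (Fin k → ℂ) × (Fin m → ℂ) => h (∑ i, (ζ.1 i).re ^ 2)) :=
    hh.continuousOn.comp_continuous htc fun ζ => htnn ζ
  have hτc : Continuous
      (fun ζ : (Fin k → ℂ) × (Fin m → ℂ) => Qfun A B ζ - h (∑ i, (ζ.1 i).re ^ 2)) :=
    hQc.sub hhc
  -- quadratic estimates
  have hAquad : ∀ v : Fin k → ℝ, v ≠ 0 → 0 < ∑ i, ∑ j, A i j * v i * v j := by
    intro v hv
    have h1 := HB19.quad_pos hAI hv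
    have h2 := HB19.sub_one_quad A v
    have h3 := HB19.sumsq_nonneg v
    linarith
  have hQA_ge : ∀ v : Fin k → ℝ, ∑ i, v i ^ 2 ≤ ∑ i, ∑ j, A i j * v i * v j := by
    intro v
    have h1 := HB19.quad_nonneg hAI v
    have h2 := HB19.sub_one_quad A v
    linarith
  obtain ⟨β, hβ, hβle⟩ := HB19.exists_beta hBpd
  have hQ_ge_y : ∀ ζ : (Fin k → ℂ) × (Fin m → ℂ),
      ∑ i, (ζ.1 i).im ^ 2 ≤ Qfun A B ζ := by
    intro ζ
    have h1 := hQA_ge fun i => (ζ.1 i).im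
    have h2 := hβle fun i => (ζ.2 i).im
    have h3 : (0:ℝ) ≤ β * ∑ i, (ζ.2 i).im ^ 2 :=
      mul_nonneg hβ.le (HB19.sumsq_nonneg _)
    have h4 := HB19.sumsq_nonneg fun i => (ζ.2 i).re
    unfold Qfun; linarith
  have hQ_ge_v : ∀ ζ : (Fin k → ℂ) × (Fin m → ℂ),
      β * ∑ i, (ζ.2 i).im ^ 2 ≤ Qfun A B ζ := by
    intro ζ
    have h1 := hQA_ge fun i => (ζ.1 i).im
    have h2 := hβle fun i => (ζ.2 i).im
    have h3 := HB19.sumsq_nonneg fun i => (ζ.1 i).im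
    have h4 := HB19.sumsq_nonneg fun i => (ζ.2 i).re
    unfold Qfun; linarith
  have hQ_ge_u : ∀ ζ : (Fin k → ℂ) × (Fin m → ℂ),
      ∑ i, (ζ.2 i).re ^ 2 ≤ Qfun A B ζ := by
    intro ζ
    have h1 := hQA_ge fun i => (ζ.1 i).im
    have h2 := hβle fun i => (ζ.2 i).im
    have h3 := HB19.sumsq_nonneg fun i => (ζ.1 i).im
    have h5 : (0:ℝ) ≤ β * ∑ i, (ζ.2 i).im ^ 2 :=
      mul_nonneg hβ.le (HB19.sumsq_nonneg _)
    unfold Qfun; linarith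
  have hQnn : ∀ ζ : (Fin k → ℂ) × (Fin m → ℂ), 0 ≤ Qfun A B ζ :=
    fun ζ => le_trans (HB19.sumsq_nonneg _) (hQ_ge_y ζ)
  have hcoer : ∀ ζ : (Fin k → ℂ) × (Fin m → ℂ), Qfun A B ζ = 0 →
      (∀ i, (ζ.1 i).im = 0) ∧ ζ.2 = 0 := by
    intro ζ hQ0
    constructor
    · exact HB19.sumsq_zero (by rw [← hQ0]; exact hQ_ge_y ζ)
    · funext i
      have hre : (ζ.2 i).re = 0 :=
        HB19.sumsq_zero (f := fun i => (ζ.2 i).re) (by rw [← hQ0]; exact hQ_ge_u ζ) i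
      have him : (ζ.2 i).im = 0 := by
        have h1 : β * ∑ i, (ζ.2 i).im ^ 2 ≤ 0 := by rw [← hQ0]; exact hQ_ge_v ζ
        have h2 : ∑ i, (ζ.2 i).im ^ 2 ≤ 0 := by
          by_contra hcon
          push_neg at hcon
          nlinarith
        exact HB19.sumsq_zero (f := fun i => (ζ.2 i).im) h2 i
      apply Complex.ext <;> simpa [hre, him]
  -- τ(0) = 0
  have hzsum : (∑ i, (((0 : (Fin k → ℂ) × (Fin m → ℂ)).1 i)).re ^ 2) = 0 := by simp
  have hτ0 : Qfun A B (0 : (Fin k → ℂ) × (Fin m → ℂ))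
      - h (∑ i, (((0 : (Fin k → ℂ) × (Fin m → ℂ)).1 i)).re ^ 2) = 0 := by
    have hh0 := hi 0 (by rw [hzsum]; exact hr.le)
    rw [hzsum] at hh0 ⊢
    rw [hh0]
    simp [Qfun]
  -- the key inequality:  s - h s ≤ c₀  for all s ≥ 0
  have hkey : ∀ s : ℝ, 0 ≤ s → s - h s ≤ c₀ := by
    intro s hs
    rcases lt_or_ge s c₀ with hlt | hge
    · have := hhpos s hs; linarith
    · set i₀ : Fin k := ⟨0, hk⟩
      have hA00 : 0 < A i₀ i₀ := by
        have h1 := hAquad (fun j => if j = i₀ then (1:ℝ) else 0) (by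
          intro hcon
          have := congrFun hcon i₀
          simp at this)
        have hterm : ∀ i j : Fin k, A i j * (if i = i₀ then (1:ℝ) else 0)
            * (if j = i₀ then (1:ℝ) else 0)
            = if i = i₀ then (if j = i₀ then A i j else 0) else 0 := fun i j => by
          split_ifs <;> simp
        have h2 : ∑ i, ∑ j, A i j * (if i = i₀ then (1:ℝ) else 0)
            * (if j = i₀ then (1:ℝ) else 0) = A i₀ i₀ := by
          simp only [hterm]
          simp [Finset.sum_ite_eq', Finset.mem_univ]
        rwa [h2] at h1
      set q : ℝ := (s - c₀) / A i₀ i₀ with hqdef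
      have hqnn : 0 ≤ q := div_nonneg (by linarith) hA00.le
      set ζs : (Fin k → ℂ) × (Fin m → ℂ) :=
        (fun i => ((if i = i₀ then Real.sqrt s else 0 : ℝ) : ℂ)
          + ((if i = i₀ then Real.sqrt q else 0 : ℝ) : ℂ) * Complex.I, 0) with hζs
      have hre : ∀ i, (ζs.1 i).re = if i = i₀ then Real.sqrt s else 0 := by
        intro i; simp [hζs]
      have him : ∀ i, (ζs.1 i).im = if i = i₀ then Real.sqrt q else 0 := by
        intro i; simp [hζs]
      have htζ : ∑ i, (ζs.1 i).re ^ 2 = s := by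
        rw [Finset.sum_eq_single i₀ (fun b _ hb => by rw [hre b]; simp [hb])
          (fun hmem => absurd (Finset.mem_univ i₀) hmem)]
        rw [hre i₀]
        simp [Real.sq_sqrt hs]
      have hQζ : Qfun A B ζs = s - c₀ := by
        have hw : ζs.2 = 0 := rfl
        have hApart : ∑ i, ∑ j, A i j * (ζs.1 i).im * (ζs.1 j).im = s - c₀ := by
          rw [Finset.sum_eq_single i₀
            (fun b _ hb => by
              apply Finset.sum_eq_zero
              intro j _
              rw [him b]
              simp [hb])
            (fun hmem => absurd (Finset.mem_univ i₀) hmem)]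
          rw [Finset.sum_eq_single i₀
            (fun b _ hb => by rw [him b]; simp [hb])
            (fun hmem => absurd (Finset.mem_univ i₀) hmem)]
          rw [him i₀, if_pos rfl, mul_assoc, Real.mul_self_sqrt hqnn, hqdef]
          field_simp
        unfold Qfun
        rw [hApart, hw]
        simp
      have hmem : ζs ∈ {ζ : (Fin k → ℂ) × (Fin m → ℂ) |
          Qfun A B ζ - h (∑ i, (ζ.1 i).re ^ 2) ≤ 0} := by
        apply hiii₁
        left
        rw [Set.mem_setOf_eq, hQζ, htζ]
        linarith
      rw [Set.mem_setOf_eq, hQζ, htζ] at hmem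
      linarith
  -- bound for h on [0, R]
  have hRpos : (0:ℝ) < R := by linarith
  obtain ⟨t₀, ht₀, hCh'⟩ := isCompact_Icc.exists_isMaxOn
    (⟨0, le_refl (0:ℝ), hRpos.le⟩ : (Icc (0:ℝ) R).Nonempty)
    (hh.continuousOn.mono Icc_subset_Ici_self)
  have hCh : ∀ y ∈ Icc (0:ℝ) R, h y ≤ h t₀ := fun y hy => hCh' hy
  set Ch : ℝ := h t₀ with hChdef
  have hChnn : 0 ≤ Ch := hhpos t₀ ht₀.1
  set M : ℝ := min 1 (c₀ - r) with hMdef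
  have hMpos : 0 < M := lt_min one_pos (by linarith)
  have hMr : M ≤ c₀ - r := min_le_right _ _
  set C : ℝ := M + Ch with hCdef
  have hCpos : 0 < C := by linarith
  -- the compact exceptional set
  set T : Set ((Fin k → ℂ) × (Fin m → ℂ)) :=
    {ζ | (∑ i, (ζ.1 i).re ^ 2) ≤ R ∧ Qfun A B ζ - h (∑ i, (ζ.1 i).re ^ 2) ≤ M ∧
      -r ≤ Qfun A B ζ - (∑ i, (ζ.1 i).re ^ 2) ∧ ε ≤ Qfun A B ζ} with hTdef
  have hTcl : IsClosed T :=
    (isClosed_le htc continuous_const).inter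
      ((isClosed_le hτc continuous_const).inter
        ((isClosed_le continuous_const (hQc.sub htc)).inter
          (isClosed_le continuous_const hQc)))
  have hTbd : Bornology.IsBounded T := by
    rw [isBounded_iff_forall_norm_le]
    refine ⟨Real.sqrt (R + C + C / β), fun ζ hζ => ?_⟩
    obtain ⟨hζR, hζM, hζρ, hζQ⟩ := hζ
    have hht : h (∑ i, (ζ.1 i).re ^ 2) ≤ Ch := hCh _ ⟨htnn ζ, hζR⟩
    have hQle : Qfun A B ζ ≤ C := by rw [hCdef]; linarith
    have hβdiv : (0:ℝ) ≤ C / β := div_nonneg hCpos.le hβ.le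
    have hD2 : (0:ℝ) ≤ R + C + C / β := by linarith
    rw [Prod.norm_def]
    apply max_le
    · rw [pi_norm_le_iff_of_nonneg (Real.sqrt_nonneg _)]
      intro i
      have h1 : (ζ.1 i).re ^ 2 ≤ R :=
        le_trans (Finset.single_le_sum (fun j _ => sq_nonneg ((ζ.1 j).re))
          (Finset.mem_univ i)) hζR
      have h2 : (ζ.1 i).im ^ 2 ≤ C :=
        le_trans (Finset.single_le_sum (fun j _ => sq_nonneg ((ζ.1 j).im))
          (Finset.mem_univ i)) (le_trans (hQ_ge_y ζ) hQle)
      have h3 : ‖ζ.1 i‖ ^ 2 ≤ R + C + C / β := by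
        rw [Complex.sq_norm, Complex.normSq_apply]
        nlinarith
      calc ‖ζ.1 i‖ = Real.sqrt (‖ζ.1 i‖ ^ 2) := (Real.sqrt_sq (norm_nonneg _)).symm
        _ ≤ Real.sqrt (R + C + C / β) := Real.sqrt_le_sqrt h3
    · rw [pi_norm_le_iff_of_nonneg (Real.sqrt_nonneg _)]
      intro i
      have h1 : (ζ.2 i).re ^ 2 ≤ C :=
        le_trans (Finset.single_le_sum (fun j _ => sq_nonneg ((ζ.2 j).re))
          (Finset.mem_univ i)) (le_trans (hQ_ge_u ζ) hQle)
      have hsv : β * ∑ j, (ζ.2 j).im ^ 2 ≤ C := le_trans (hQ_ge_v ζ) hQle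
      have h2 : (ζ.2 i).im ^ 2 ≤ C / β := by
        rw [le_div_iff₀ hβ]
        have := Finset.single_le_sum (fun j _ => sq_nonneg ((ζ.2 j).im))
          (Finset.mem_univ i)
        nlinarith
      have h3 : ‖ζ.2 i‖ ^ 2 ≤ R + C + C / β := by
        rw [Complex.sq_norm, Complex.normSq_apply]
        nlinarith
      calc ‖ζ.2 i‖ = Real.sqrt (‖ζ.2 i‖ ^ 2) := (Real.sqrt_sq (norm_nonneg _)).symm
        _ ≤ Real.sqrt (R + C + C / β) := Real.sqrt_le_sqrt h3
  have hTcp : IsCompact T := Metric.isCompact_of_isClosed_isBounded hTcl hTbd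
  -- choice of c₁
  obtain ⟨c₁, hc₁pos, hc₁M, hc₁T⟩ : ∃ c₁ : ℝ, 0 < c₁ ∧ c₁ ≤ M ∧
      ∀ ζ ∈ T, c₁ ≤ Qfun A B ζ - h (∑ i, (ζ.1 i).re ^ 2) := by
    rcases T.eq_empty_or_nonempty with hTe | hTne
    · exact ⟨M, hMpos, le_refl M, by rw [hTe]; intro ζ hζ; exact absurd hζ (notMem_empty ζ)⟩
    · obtain ⟨p₀, hp₀, hmin⟩ := hTcp.exists_isMinOn hTne hτc.continuousOn
      have hp₀pos : 0 < Qfun A B p₀ - h (∑ i, (p₀.1 i).re ^ 2) := by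
        by_contra hcon
        push_neg at hcon
        have hmem2 : p₀ ∈ {ζ : (Fin k → ℂ) × (Fin m → ℂ) |
            Qfun A B ζ - h (∑ i, (ζ.1 i).re ^ 2) ≤ 0} := hcon
        have := hiii₂ hmem2
        obtain ⟨hp₀R, hp₀M, hp₀ρ, hp₀Q⟩ := hp₀
        rcases this with hc | hc <;> rw [Set.mem_setOf_eq] at hc <;> linarith
      refine ⟨min M (Qfun A B p₀ - h (∑ i, (p₀.1 i).re ^ 2)),
        lt_min hMpos hp₀pos, min_le_left _ _, fun ζ hζ => ?_⟩
      exact le_trans (min_le_right _ _) (hmin hζ)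
  refine ⟨c₁, hc₁pos, fun c hc hcc₁ => ?_⟩
  refine ⟨?_, ?_, ?_, ?_, ?_⟩
  · -- (a1)
    rintro ζ (hζ | hζ)
    · rw [Set.mem_setOf_eq] at hζ ⊢
      have := hkey (∑ i, (ζ.1 i).re ^ 2) (htnn ζ)
      linarith
    · rw [Set.mem_setOf_eq]
      obtain ⟨hy, hw⟩ := hζ
      have hQ0 : Qfun A B ζ = 0 := by simp [Qfun, hy, hw]
      rw [hQ0]
      have := hhpos _ (htnn ζ)
      linarith
  · -- (a2)
    intro ζ hζ
    rw [Set.mem_setOf_eq] at hζ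
    by_contra hcon
    simp only [Set.mem_union, Set.mem_setOf_eq, not_or, not_lt] at hcon
    obtain ⟨h1, h2⟩ := hcon
    rcases le_or_gt R (∑ i, (ζ.1 i).re ^ 2) with hR | hR
    · have := hii ζ hR
      linarith
    · have hTmem : ζ ∈ T := ⟨hR.le, by linarith, h1, h2⟩
      have := hc₁T ζ hTmem
      linarith
  · -- (b1) frontier
    have hcl : IsClosed {ζ : (Fin k → ℂ) × (Fin m → ℂ) |
        Qfun A B ζ - h (∑ i, (ζ.1 i).re ^ 2) ≤ c} := isClosed_le hτc continuous_const
    have hint : interior {ζ : (Fin k → ℂ) × (Fin m → ℂ) |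
          Qfun A B ζ - h (∑ i, (ζ.1 i).re ^ 2) ≤ c}
        = {ζ : (Fin k → ℂ) × (Fin m → ℂ) |
          Qfun A B ζ - h (∑ i, (ζ.1 i).re ^ 2) < c} := by
      apply Subset.antisymm
      · intro p hp
        rw [Set.mem_setOf_eq]
        have hple' : p ∈ {ζ : (Fin k → ℂ) × (Fin m → ℂ) |
            Qfun A B ζ - h (∑ i, (ζ.1 i).re ^ 2) ≤ c} := interior_subset hp
        have hple : Qfun A B p - h (∑ i, (p.1 i).re ^ 2) ≤ c := hple'
        rcases hple.lt_or_eq with hlt | heq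
        · exact hlt
        · exfalso
          have hmax : IsLocalMax
              (fun ζ : (Fin k → ℂ) × (Fin m → ℂ) =>
                Qfun A B ζ - h (∑ i, (ζ.1 i).re ^ 2)) p := by
            have hnb := mem_interior_iff_mem_nhds.1 hp
            filter_upwards [hnb] with q hq
            rw [heq]; exact hq
          have h0 := (hcrit p).1 hmax.fderiv_eq_zero
          rw [h0] at heq
          rw [hτ0] at heq
          linarith
      · exact interior_maximal
          (fun p hp => show Qfun A B p - h (∑ i, (p.1 i).re ^ 2) ≤ c from le_of_lt hp)
          (isOpen_lt hτc continuous_const)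
    rw [hcl.frontier_eq, hint]
    ext p
    simp only [Set.mem_diff, Set.mem_setOf_eq, not_lt]
    constructor
    · rintro ⟨ha, hb⟩; exact le_antisymm ha hb
    · intro ha; exact ⟨ha.le, ha.ge⟩
  · -- (b2)
    intro p hp
    refine ⟨?_, fun v hv => hpsh p v hv⟩
    intro h0
    have h0' := (hcrit p).1 h0
    rw [h0'] at hp
    rw [hτ0] at hp
    linarith
  · -- (c)
    refine ⟨HB19.Hmap A B (c - c₀),
      (HB19.Hmap_cont A B (c - c₀) hcoer).continuousOn, ?_, ?_, ?_, ?_⟩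
    · intro t ht ζ hζ
      have hQH := HB19.Hmap_Q A B (c - c₀) (t, ζ)
      have htH := HB19.Hmap_t A B (c - c₀) (t, ζ)
      rw [hQH, htH]
      have hs0 := HB19.sfac_nonneg A B (c - c₀) (t, ζ)
      have hs1 := HB19.sfac_le_one A B (c - c₀) (t, ζ)
      have hQn := hQnn ζ
      have hsq : HB19.sfac A B (c - c₀) (t, ζ) ^ 2 * Qfun A B ζ ≤ Qfun A B ζ := by
        nlinarith [mul_nonneg (mul_nonneg (sub_nonneg.2 hs1)
          (by linarith : (0:ℝ) ≤ 1 + HB19.sfac A B (c - c₀) (t, ζ))) hQn]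
      linarith
    · intro ζ hζ
      exact HB19.Hmap_zero_time A B (c - c₀) (0, ζ) rfl
    · intro ζ hζ
      by_cases hqz : Qfun A B ζ = 0
      · right
        obtain ⟨hy, hw⟩ := hcoer ζ hqz
        rw [HB19.Hmap_lam A B (c - c₀) (1, ζ) hy hw]
        exact ⟨hy, hw⟩
      · have hqpos : 0 < Qfun A B ζ := lt_of_le_of_ne (hQnn ζ) (Ne.symm hqz)
        have hsf1 : HB19.sfac A B (c - c₀) (1, ζ) = HB19.sig A B (c - c₀) ζ := by
          rw [HB19.sfac]
          norm_num
        rcases le_or_gt (∑ i, (ζ.1 i).re ^ 2 + (c - c₀)) 0 with ha | ha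
        · right
          have hs0 : HB19.sig A B (c - c₀) ζ = 0 := by
            rw [HB19.sig]
            have hle : ((∑ i, (ζ.1 i).re ^ 2 + (c - c₀)) / Qfun A B ζ) ≤ 0 :=
              div_nonpos_iff.2 (Or.inr ⟨ha, hQnn ζ⟩)
            rw [max_eq_left hle, min_eq_right zero_le_one, Real.sqrt_zero]
          have := HB19.Hmap_sfac_zero A B (c - c₀) (1, ζ) (by rw [hsf1, hs0])
          exact this
        · left
          rw [Set.mem_setOf_eq, HB19.Hmap_Q, HB19.Hmap_t, hsf1]
          have hgnn : (0:ℝ) ≤ min 1 (max 0 ((∑ i, (ζ.1 i).re ^ 2 + (c - c₀)) / Qfun A B ζ)) :=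
            le_min zero_le_one (le_max_left _ _)
          have hsq : HB19.sig A B (c - c₀) ζ ^ 2
              = min 1 (max 0 ((∑ i, (ζ.1 i).re ^ 2 + (c - c₀)) / Qfun A B ζ)) := by
            rw [HB19.sig]; exact Real.sq_sqrt hgnn
          rw [hsq]
          have hmax : max 0 ((∑ i, (ζ.1 i).re ^ 2 + (c - c₀)) / Qfun A B ζ)
              = (∑ i, (ζ.1 i).re ^ 2 + (c - c₀)) / Qfun A B ζ :=
            max_eq_right (le_of_lt (div_pos ha hqpos))
          rw [hmax]
          have hle : min 1 ((∑ i, (ζ.1 i).re ^ 2 + (c - c₀)) / Qfun A B ζ) * Qfun A B ζ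
              ≤ (∑ i, (ζ.1 i).re ^ 2 + (c - c₀)) := by
            calc min 1 ((∑ i, (ζ.1 i).re ^ 2 + (c - c₀)) / Qfun A B ζ) * Qfun A B ζ
                ≤ ((∑ i, (ζ.1 i).re ^ 2 + (c - c₀)) / Qfun A B ζ) * Qfun A B ζ :=
                  mul_le_mul_of_nonneg_right (min_le_right _ _) (hQnn ζ)
              _ = ∑ i, (ζ.1 i).re ^ 2 + (c - c₀) := div_mul_cancel₀ _ hqz
          linarith
    · intro t ht e he
      rcases he with he | he
      · rw [Set.mem_setOf_eq] at he
        by_cases hqz : Qfun A B e = 0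
        · obtain ⟨hy, hw⟩ := hcoer e hqz
          exact HB19.Hmap_lam A B (c - c₀) (t, e) hy hw
        · have hqpos : 0 < Qfun A B e := lt_of_le_of_ne (hQnn e) (Ne.symm hqz)
          apply HB19.Hmap_id_of_sig_one
          rw [HB19.sig]
          have hone : 1 ≤ (∑ i, (e.1 i).re ^ 2 + (c - c₀)) / Qfun A B e :=
            (one_le_div hqpos).2 (by linarith)
          rw [max_eq_right (by linarith : (0:ℝ) ≤ _), min_eq_left hone, Real.sqrt_one]
      · exact HB19.Hmap_lam A B (c - c₀) (t, e) he.1 he.2
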